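/- Let k, m be positive integers with gcd(k, m) = 1, let q = 2^k, and let α ∈ F_{2^m} be such that x^{q+1} + x + α has no root in F_{2^m}. For u ∈ F_{2^m}, set f_u = u^{q+1} + u + α and g_u = u^{q²+1} + α·u^{q²} + (1 + α^q)·u + α. Then for every u ∈ F_{2^m}, the linearized map y ↦ α^q·f_u²·y^{q²} + g_u²·y^q + α·f_u^{2q}·y is a permutation of F_{2^m}. -/

import Mathlib

/-- With f_u = u^{q+1} + u + α and g_u = u^{q²+1} + α·u^{q²} + (1+α^q)·u + α,
if x^{q+1} + x + α has no root in F_{2^m}, then for every u the linearized map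
y ↦ α^q·f_u²·y^{q²} + g_u²·y^q + α·f_u^{2q}·y is a permutation of F_{2^m}. -/
theorem stmt_7 (k m : ℕ) (hk : 0 < k) (hm : 0 < m) (hgcd : Nat.gcd k m = 1)
    (K : Type*) [Field K] [Fintype K] [CharP K 2] (hcard : Fintype.card K = 2 ^ m)
    (q : ℕ) (hq : q = 2 ^ k) (α : K)
    (hα : ∀ x : K, x ^ (q + 1) + x + α ≠ 0)
    (f g : K → K)
    (hf : ∀ u : K, f u = u ^ (q + 1) + u + α)
    (hg : ∀ u : K, g u = u ^ (q ^ 2 + 1) + α * u ^ (q ^ 2) + (1 + α ^ q) * u + α) :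
    ∀ u : K, Function.Bijective
      (fun y : K => α ^ q * (f u) ^ 2 * y ^ (q ^ 2) + (g u) ^ 2 * y ^ q
        + α * (f u) ^ (2 * q) * y) := by
  have h2 : (2 : K) = 0 := CharTwo.two_eq_zero
  have hq0 : q ≠ 0 := by subst hq; positivity
  have hq1 : q + 1 ≠ 0 := by omega
  have hfrob : ∀ a b : K, (a + b) ^ q = a ^ q + b ^ q := by
    intro a b
    rw [hq]
    exact add_pow_char_pow ..
  -- squaring is surjective
  have hsqinj : Function.Injective (fun a : K => a ^ 2) := by
    intro a b hab
    simp only at hab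
    have hz : (a + b) ^ 2 = 0 := by linear_combination hab + (a * b + b ^ 2) * h2
    have := pow_eq_zero_iff (two_ne_zero) |>.mp hz
    linear_combination this - b * h2
  have hsqsurj : ∀ a : K, ∃ b : K, b ^ 2 = a := by
    intro a
    obtain ⟨b, hb⟩ := Finite.injective_iff_surjective.mp hsqinj a
    exact ⟨b, hb⟩
  -- q-th power is surjective and injective
  have hqinj : Function.Injective (fun a : K => a ^ q) := by
    intro a b hab
    simp only at hab
    have hz : (a + b) ^ q = 0 := by rw [hfrob, hab, CharTwo.add_self_eq_zero]
    have := pow_eq_zero_iff hq0 |>.mp hz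
    linear_combination this - b * h2
  have hqsurj : ∀ a : K, ∃ b : K, b ^ q = a := by
    intro a
    obtain ⟨b, hb⟩ := Finite.injective_iff_surjective.mp hqinj a
    exact ⟨b, hb⟩
  have hαne : α ≠ 0 := by
    intro h
    apply hα 0
    rw [h, zero_pow hq1]
    ring
  obtain ⟨β, hβ⟩ := hsqsurj α
  have hβne : β ≠ 0 := by
    intro h
    apply hαne
    rw [← hβ, h]; ring
  have hβq : (β ^ q) ^ 2 = α ^ q := by rw [← hβ]; ring
  intro u
  have hFne : f u ≠ 0 := by rw [hf]; exact hα u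
  have hFq : (f u) ^ q = (u ^ q) ^ q * u ^ q + u ^ q + α ^ q := by
    rw [hf, hfrob, hfrob]
    ring
  have hG : g u = ((u ^ q) ^ q + 1) * f u + u * (f u) ^ q := by
    rw [hg, hFq, hf]
    linear_combination (-((u ^ q) ^ q * u ^ q * u + u ^ q * u)) * h2
  have hker : ∀ y : K, α ^ q * (f u) ^ 2 * y ^ (q ^ 2) + (g u) ^ 2 * y ^ q
      + α * (f u) ^ (2 * q) * y = 0 → y = 0 := by
    intro y hLy
    by_contra hy0
    have hyy : y * y⁻¹ = 1 := mul_inv_cancel₀ hy0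
    obtain ⟨t, ht⟩ := hsqsurj (y ^ q * y⁻¹)
    have ht2 : t ^ 2 * y = y ^ q := by
      linear_combination y * ht + y ^ q * hyy
    have ht3 : t ^ (2 * q + 2) * (y ^ q * y) = y ^ (q ^ 2) * y ^ q := by
      have h := congrArg (· ^ (q + 1)) ht2
      linear_combination h
    have hE : β ^ q * f u * t ^ (q + 1) + g u * t + β * (f u) ^ q = 0 := by
      have hS2 : (β ^ q * f u * t ^ (q + 1) + g u * t + β * (f u) ^ q) ^ 2 * (y ^ q * y) = 0 := by
        linear_combination (β ^ q * f u * t ^ (q + 1) * (g u * t)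
            + β ^ q * f u * t ^ (q + 1) * (β * (f u) ^ q)
            + g u * t * β * (f u) ^ q) * (y ^ q * y) * h2
          + ((f u) ^ 2 * t ^ (2 * q + 2) * (y ^ q * y)) * hβq
          + (α ^ q * (f u) ^ 2) * ht3
          + ((g u) ^ 2 * y ^ q) * ht2
          + ((f u) ^ (2 * q) * (y ^ q * y)) * hβ
          + y ^ q * hLy
      have hyyne : y ^ q * y ≠ 0 := mul_ne_zero (pow_ne_zero q hy0) hy0
      have := (mul_eq_zero.mp hS2).resolve_right hyyne
      exact pow_eq_zero_iff two_ne_zero |>.mp this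
    have htne : t ≠ 0 := by
      intro h
      rw [h, zero_pow hq1] at hE
      have hb : β * (f u) ^ q = 0 := by linear_combination hE
      rcases mul_eq_zero.mp hb with h' | h'
      · exact hβne h'
      · exact pow_ne_zero q hFne h'
    have htt : t * t⁻¹ = 1 := mul_inv_cancel₀ htne
    set v := u + β * t⁻¹ with hv_def
    have hv : t * v = t * u + β := by
      rw [hv_def]
      linear_combination β * htt
    have hstar : β ^ q * f u * t ^ q + ((u ^ q) ^ q + 1) * f u + (f u) ^ q * v = 0 := by
      rw [hG] at hE
      have h4 : t * (β ^ q * f u * t ^ q + ((u ^ q) ^ q + 1) * f u + (f u) ^ q * v) = 0 := by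
        linear_combination hE + (f u) ^ q * hv
      exact (mul_eq_zero.mp h4).resolve_left htne
    have hvq : t ^ q * v ^ q = t ^ q * u ^ q + β ^ q := by
      have h := congrArg (· ^ q) hv
      calc t ^ q * v ^ q = (t * v) ^ q := (mul_pow ..).symm
        _ = (t * u + β) ^ q := h
        _ = (t * u) ^ q + β ^ q := hfrob _ _
        _ = t ^ q * u ^ q + β ^ q := by rw [mul_pow]
    have hG3 : α ^ q * f u + (((u ^ q) ^ q + 1) * f u + (f u) ^ q * v) * (v ^ q + u ^ q) = 0 := by
      linear_combination (v ^ q + u ^ q) * hstar - β ^ q * f u * hvq - f u * hβq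
        - β ^ q * f u * t ^ q * u ^ q * h2
    have hvne : v ≠ 0 := by
      intro h
      rw [h, zero_pow hq0] at hG3
      have hFq0 : f u * (f u) ^ q = 0 := by linear_combination hG3 + f u * hFq
      rcases mul_eq_zero.mp hFq0 with h' | h'
      · exact hFne h'
      · exact pow_ne_zero q hFne h'
    have hvv : v * v⁻¹ = 1 := mul_inv_cancel₀ hvne
    set w := f u * v⁻¹ with hw_def
    have hw : w * v = f u := by
      rw [hw_def]
      linear_combination f u * hvv
    have hwq : w ^ q * v ^ q = (f u) ^ q := by rw [← mul_pow, hw]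
    have hEqW : w ^ (q + 1) + u ^ q * w ^ q + ((u ^ q) ^ q + 1) * w + (f u) ^ q = 0 := by
      have h6 : f u * (f u) ^ q
          * (w ^ (q + 1) + u ^ q * w ^ q + ((u ^ q) ^ q + 1) * w + (f u) ^ q) = 0 := by
        linear_combination w ^ (q + 1) * hG3 - ((u ^ q) ^ q + 1) * f u * w * hwq
          - (f u) ^ q * w ^ q * v ^ q * hw - (f u) ^ q * f u * hwq
          - (f u) ^ q * u ^ q * w ^ q * hw + f u * w ^ (q + 1) * hFq
      exact (mul_eq_zero.mp h6).resolve_left (mul_ne_zero hFne (pow_ne_zero q hFne))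
    obtain ⟨Y, hY⟩ := hqsurj (w + u ^ q)
    apply hα Y
    have hfinal : (Y ^ (q + 1) + Y + α) ^ q = 0 := by
      rw [hfrob, hfrob, hY]
      have e2 : (Y ^ (q + 1)) ^ q = (w + u ^ q) ^ q * (w + u ^ q) := by
        rw [← hY]; ring
      rw [e2, hfrob]
      linear_combination hEqW - hFq
    exact pow_eq_zero_iff hq0 |>.mp hfinal
  rw [← Finite.injective_iff_bijective]
  intro y₁ y₂ h
  simp only at h
  have e1 : (y₁ + y₂) ^ q = y₁ ^ q + y₂ ^ q := hfrob _ _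
  have a1 : ∀ z : K, z ^ (q ^ 2) = (z ^ q) ^ q := by
    intro z
    rw [pow_two, pow_mul]
  have e2 : (y₁ + y₂) ^ (q ^ 2) = y₁ ^ (q ^ 2) + y₂ ^ (q ^ 2) := by
    rw [a1 (y₁ + y₂), a1 y₁, a1 y₂, e1, hfrob]
  have hsum : α ^ q * (f u) ^ 2 * (y₁ + y₂) ^ (q ^ 2) + (g u) ^ 2 * (y₁ + y₂) ^ q
      + α * (f u) ^ (2 * q) * (y₁ + y₂) = 0 := by
    rw [e1, e2]
    linear_combination h + (α ^ q * (f u) ^ 2 * y₂ ^ (q ^ 2) + (g u) ^ 2 * y₂ ^ q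
      + α * (f u) ^ (2 * q) * y₂) * h2
  have h0 := hker _ hsum
  linear_combination h0 - y₂ * h2
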